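/- For every n ≥ 1, the recurrence coefficient b̃_n = ⟨f_{n+1}, s_{n−1}⟩_S/‖s_{n−1}‖_S² satisfies b̃_n = ‖p_n‖₂²/‖s_{n−1}‖_S², and in particular 0 < b̃_n ≤ C²; for every n ≥ 2 one has moreover b̃_n ≤ χ^{−1}·C⁴. -/

import Mathlib

open Filter RealInnerProductSpace

variable {H : Type*} [NormedAddCommGroup H] [InnerProductSpace ℝ H]

/-- `Wlt P n` is the span of `P 0, …, P (n-1)`; thus `Wlt P 0 = ⊥ = W_{-1}` and
`Wlt P (n+1)` is the space `W_n = span{P_0, …, P_n}`. -/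
def Wlt (P : ℕ → H) (n : ℕ) : Submodule ℝ H := Submodule.span ℝ (P '' Set.Iio n)

/-- `Wtot P` is the space `W = ⋃ₙ Wₙ` of all polynomials. -/
def Wtot (P : ℕ → H) : Submodule ℝ H := Submodule.span ℝ (Set.range P)

/-- The Sobolev inner product `⟨f, g⟩_S = ⟨f, g⟩₂ + χ⟨Δf, Δg⟩₂`. -/
noncomputable def innerS (Δ : H →ₗ[ℝ] H) (χ : ℝ) (f g : H) : ℝ :=
  ⟪ f, g ⟫ + χ * ⟪ Δ f, Δ g ⟫

/-- The Sobolev norm `‖f‖_S = √(‖f‖₂² + χ‖Δf‖₂²)`. -/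
noncomputable def normS (Δ : H →ₗ[ℝ] H) (χ : ℝ) (f : H) : ℝ :=
  Real.sqrt (‖f‖ ^ 2 + χ * ‖Δ f‖ ^ 2)

lemma Wlt_mono (P : ℕ → H) {m n : ℕ} (h : m ≤ n) : Wlt P m ≤ Wlt P n :=
  Submodule.span_mono (Set.image_mono (Set.Iio_subset_Iio h))

lemma Wlt_le_Wtot (P : ℕ → H) (n : ℕ) : Wlt P n ≤ Wtot P :=
  Submodule.span_mono (Set.image_subset_range _ _)

lemma P_mem_Wlt (P : ℕ → H) {k n : ℕ} (h : k < n) : P k ∈ Wlt P n :=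
  Submodule.subset_span ⟨k, h, rfl⟩

lemma P_not_mem_Wlt (P : ℕ → H) (hP : LinearIndependent ℝ P) (n : ℕ) : P n ∉ Wlt P n :=
  hP.notMem_span_image (by simp)

/-- `Δ` maps `Wlt P (n+1)` into `Wlt P n`. -/
lemma Delta_maps (P : ℕ → H) (Δ : H →ₗ[ℝ] H) (hΔ0 : Δ (P 0) = 0)
    (hΔsucc : ∀ n, Δ (P (n + 1)) = P n) {n : ℕ} {u : H} (hu : u ∈ Wlt P (n + 1)) :
    Δ u ∈ Wlt P n := by
  induction hu using Submodule.span_induction with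
  | mem x hx =>
    obtain ⟨k, hk, rfl⟩ := hx
    cases k with
    | zero => simp [hΔ0]
    | succ j =>
      rw [hΔsucc]
      exact P_mem_Wlt P (Nat.lt_of_succ_lt_succ hk)
  | zero => simp
  | add x y _ _ hx hy => rw [map_add]; exact add_mem hx hy
  | smul c x _ hx => rw [map_smul]; exact Submodule.smul_mem _ _ hx

/-- If `v ∈ Wlt P (n+2)` and `Δ v ∈ Wlt P n`, then `v ∈ Wlt P (n+1)`. -/
lemma degree_drop (P : ℕ → H) (hP : LinearIndependent ℝ P) (Δ : H →ₗ[ℝ] H)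
    (hΔ0 : Δ (P 0) = 0) (hΔsucc : ∀ n, Δ (P (n + 1)) = P n)
    {n : ℕ} {v : H} (hv : v ∈ Wlt P (n + 2)) (hΔv : Δ v ∈ Wlt P n) :
    v ∈ Wlt P (n + 1) := by
  have hsplit : Wlt P (n + 2) = Wlt P (n + 1) ⊔ (ℝ ∙ P (n + 1)) := by
    have hio : Set.Iio (n + 2) = Set.Iio (n + 1) ∪ {n + 1} := by
      ext x; simp; omega
    rw [Wlt, Wlt, hio, Set.image_union, Set.image_singleton, Submodule.span_union]
  rw [hsplit] at hv
  obtain ⟨w, hw, b, hb, rfl⟩ := Submodule.mem_sup.mp hv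
  obtain ⟨c, rfl⟩ := Submodule.mem_span_singleton.mp hb
  have h1 : Δ w ∈ Wlt P n := Delta_maps P Δ hΔ0 hΔsucc hw
  have hcP : c • P n ∈ Wlt P n := by
    have h2 : Δ (w + c • P (n + 1)) - Δ w = c • P n := by
      rw [map_add, map_smul, hΔsucc]; abel
    rw [← h2]
    exact sub_mem hΔv h1
  rcases eq_or_ne c 0 with hc | hc
  · simpa [hc] using hw
  · exact absurd ((Submodule.smul_mem_iff _ hc).mp hcP) (P_not_mem_Wlt P hP n)

/-- minimality of `‖p n‖` among monic elements of degree `n`. -/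
lemma p_min (P : ℕ → H) (p : ℕ → H)
    (hpmonic : ∀ n, p n - P n ∈ Wlt P n)
    (hportho : ∀ n, ∀ w ∈ Wlt P n, ⟪ p n, w ⟫ = 0)
    (n : ℕ) {q : H} (hq : q - P n ∈ Wlt P n) : ‖p n‖ ≤ ‖q‖ := by
  have hdiff : q - p n ∈ Wlt P n := by
    have h := sub_mem hq (hpmonic n)
    simpa using h
  have hsq : ‖q‖ ^ 2 = ‖p n‖ ^ 2 + ‖q - p n‖ ^ 2 := by
    have hq' : q = p n + (q - p n) := by abel
    rw [hq', norm_add_sq_real, hportho n _ hdiff]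
    have : p n + (q - p n) - p n = q - p n := by abel
    rw [this]; ring
  nlinarith [norm_nonneg q, norm_nonneg (p n), sq_nonneg ‖q - p n‖]

lemma monic_ne_zero (P : ℕ → H) (hP : LinearIndependent ℝ P) {n : ℕ} {q : H}
    (hq : q - P n ∈ Wlt P n) (h0 : q = 0) : False := by
  apply P_not_mem_Wlt P hP n
  rw [h0] at hq
  simpa using neg_mem hq

lemma monic_mem (P : ℕ → H) {n : ℕ} {q : H} (hq : q - P n ∈ Wlt P n) :
    q ∈ Wlt P (n + 1) := by
  have : q = (q - P n) + P n := by abel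
  rw [this]
  exact add_mem (Wlt_mono P (Nat.le_succ n) hq) (P_mem_Wlt P (Nat.lt_succ_self n))

/-- `G` sends a monic element of degree `n` to a monic element of degree `n+1`. -/
lemma G_monic (P : ℕ → H) (hP : LinearIndependent ℝ P) (Δ G : H →ₗ[ℝ] H)
    (hΔ0 : Δ (P 0) = 0) (hΔsucc : ∀ n, Δ (P (n + 1)) = P n)
    (hGinv : ∀ u ∈ Wtot P, Δ (G u) = u)
    (hGmap : ∀ n, ∀ u ∈ Wlt P (n + 1), G u ∈ Wlt P (n + 2))
    {n : ℕ} {u : H} (humon : u - P n ∈ Wlt P n) :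
    G u - P (n + 1) ∈ Wlt P (n + 1) := by
  have hu : u ∈ Wlt P (n + 1) := monic_mem P humon
  have hv : G u - P (n + 1) ∈ Wlt P (n + 2) :=
    sub_mem (hGmap n u hu) (P_mem_Wlt P (by omega))
  have hΔv : Δ (G u - P (n + 1)) ∈ Wlt P n := by
    rw [map_sub, hGinv u (Wlt_le_Wtot P _ hu), hΔsucc]
    exact humon
  exact degree_drop P hP Δ hΔ0 hΔsucc hv hΔv

/-- For `n ≥ 1`, `b̃_n = ‖p_n‖₂²/‖s_{n−1}‖_S²` and `0 < b̃_n ≤ C²`; for `n ≥ 2` also `b̃_n ≤ χ⁻¹C⁴`. -/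
theorem statement9
    (P : ℕ → H) (hP : LinearIndependent ℝ P)
    (Δ G : H →ₗ[ℝ] H)
    (hΔ0 : Δ (P 0) = 0) (hΔsucc : ∀ n, Δ (P (n + 1)) = P n)
    (hGsym : ∀ u ∈ Wtot P, ∀ v ∈ Wtot P, ⟪ G u, v ⟫ = ⟪ u, G v ⟫)
    (hGinv : ∀ u ∈ Wtot P, Δ (G u) = u)
    (hGmap : ∀ n, ∀ u ∈ Wlt P (n + 1), G u ∈ Wlt P (n + 2))
    (C : ℝ) (hC : 0 < C)
    (hGbound : ∀ u ∈ Wtot P, ‖G u‖ ≤ C * ‖u‖)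
    (χ : ℝ) (hχ : 0 < χ)
    (p : ℕ → H)
    (hpmonic : ∀ n, p n - P n ∈ Wlt P n)
    (hportho : ∀ n, ∀ w ∈ Wlt P n, ⟪ p n, w ⟫ = 0)
    (s : ℕ → H)
    (hsmonic : ∀ n, s n - P n ∈ Wlt P n)
    (hsortho : ∀ n, ∀ w ∈ Wlt P n, innerS Δ χ (s n) w = 0)
    : ∀ n, 1 ≤ n →
      innerS Δ χ (G (p n)) (s (n - 1)) / (‖s (n - 1)‖ ^ 2 + χ * ‖Δ (s (n - 1))‖ ^ 2)
        = ‖p n‖ ^ 2 / (‖s (n - 1)‖ ^ 2 + χ * ‖Δ (s (n - 1))‖ ^ 2) ∧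
      0 < innerS Δ χ (G (p n)) (s (n - 1)) /
            (‖s (n - 1)‖ ^ 2 + χ * ‖Δ (s (n - 1))‖ ^ 2) ∧
      innerS Δ χ (G (p n)) (s (n - 1)) /
            (‖s (n - 1)‖ ^ 2 + χ * ‖Δ (s (n - 1))‖ ^ 2) ≤ C ^ 2 ∧
      (2 ≤ n →
        innerS Δ χ (G (p n)) (s (n - 1)) /
            (‖s (n - 1)‖ ^ 2 + χ * ‖Δ (s (n - 1))‖ ^ 2) ≤ χ⁻¹ * C ^ 4) := by
  rintro n hn
  obtain ⟨m, rfl⟩ : ∃ m, n = m + 1 := ⟨n - 1, by omega⟩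
  have hm1 : m + 1 - 1 = m := by omega
  rw [hm1]
  -- memberships
  have hpmem : ∀ k, p k ∈ Wlt P (k + 1) := fun k => monic_mem P (hpmonic k)
  have hsmem : ∀ k, s k ∈ Wlt P (k + 1) := fun k => monic_mem P (hsmonic k)
  have hptot : p (m + 1) ∈ Wtot P := Wlt_le_Wtot P _ (hpmem (m + 1))
  have hstot : s m ∈ Wtot P := Wlt_le_Wtot P _ (hsmem m)
  -- G (s m) is monic of degree m+1
  have hGs : G (s m) - P (m + 1) ∈ Wlt P (m + 1) :=
    G_monic P hP Δ G hΔ0 hΔsucc hGinv hGmap (hsmonic m)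
  -- numerator = ‖p (m+1)‖²
  have hnum : innerS Δ χ (G (p (m + 1))) (s m) = ‖p (m + 1)‖ ^ 2 := by
    have h1 : Δ (G (p (m + 1))) = p (m + 1) := hGinv _ hptot
    have h2 : ⟪ p (m + 1), Δ (s m) ⟫ = 0 :=
      hportho (m + 1) _ (Wlt_mono P (Nat.le_succ m) (Delta_maps P Δ hΔ0 hΔsucc (hsmem m)))
    have h3 : ⟪ G (p (m + 1)), s m ⟫ = ⟪ p (m + 1), G (s m) ⟫ :=
      hGsym _ hptot _ hstot
    have h4 : ⟪ p (m + 1), G (s m) ⟫ = ⟪ p (m + 1), P (m + 1) ⟫ := by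
      have : ⟪ p (m + 1), G (s m) - P (m + 1) ⟫ = 0 := hportho (m + 1) _ hGs
      rw [inner_sub_right] at this
      linarith
    have h5 : ⟪ p (m + 1), P (m + 1) ⟫ = ‖p (m + 1)‖ ^ 2 := by
      have h6 : ⟪ p (m + 1), p (m + 1) - P (m + 1) ⟫ = 0 :=
        hportho (m + 1) _ (hpmonic (m + 1))
      rw [inner_sub_right] at h6
      have := real_inner_self_eq_norm_sq (p (m + 1))
      linarith
    rw [innerS, h1, h2, h3, h4, h5]
    ring
  -- denominator positive
  have hs0 : s m ≠ 0 := fun h => monic_ne_zero P hP (hsmonic m) h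
  have hD : 0 < ‖s m‖ ^ 2 + χ * ‖Δ (s m)‖ ^ 2 := by
    have : 0 < ‖s m‖ := norm_pos_iff.mpr hs0
    nlinarith [norm_nonneg (Δ (s m))]
  -- p (m+1) ≠ 0
  have hp0 : p (m + 1) ≠ 0 := fun h => monic_ne_zero P hP (hpmonic (m + 1)) h
  have hpnorm : 0 < ‖p (m + 1)‖ := norm_pos_iff.mpr hp0
  -- key bound: ‖p (m+1)‖ ≤ ‖G (s m)‖ ≤ C ‖s m‖
  have hmin : ‖p (m + 1)‖ ≤ ‖G (s m)‖ :=
    p_min P p hpmonic hportho (m + 1) hGs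
  have hCb : ‖G (s m)‖ ≤ C * ‖s m‖ := hGbound _ hstot
  refine ⟨by rw [hnum], ?_, ?_, ?_⟩
  · rw [hnum]
    positivity
  · rw [hnum, div_le_iff₀ hD]
    have h1 : ‖p (m + 1)‖ ^ 2 ≤ C ^ 2 * ‖s m‖ ^ 2 := by
      nlinarith [norm_nonneg (G (s m)), norm_nonneg (s m)]
    nlinarith [mul_nonneg (sq_nonneg C) (mul_nonneg hχ.le (sq_nonneg ‖Δ (s m)‖))]
  · rintro h2
    obtain ⟨k, rfl⟩ : ∃ k, m = k + 1 := ⟨m - 1, by omega⟩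
    -- G (G (p k)) is monic of degree k+2
    have hGp : G (p k) - P (k + 1) ∈ Wlt P (k + 1) :=
      G_monic P hP Δ G hΔ0 hΔsucc hGinv hGmap (hpmonic k)
    have hGGp : G (G (p k)) - P (k + 2) ∈ Wlt P (k + 2) :=
      G_monic P hP Δ G hΔ0 hΔsucc hGinv hGmap hGp
    have hGptot : G (p k) ∈ Wtot P := Wlt_le_Wtot P _ (monic_mem P hGp)
    have hpktot : p k ∈ Wtot P := Wlt_le_Wtot P _ (hpmem k)
    have hb1 : ‖p (k + 2)‖ ≤ ‖G (G (p k))‖ := p_min P p hpmonic hportho (k + 2) hGGp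
    have hb2 : ‖G (G (p k))‖ ≤ C * ‖G (p k)‖ := hGbound _ hGptot
    have hb3 : ‖G (p k)‖ ≤ C * ‖p k‖ := hGbound _ hpktot
    -- Δ (s (k+1)) is monic of degree k
    have hΔs : Δ (s (k + 1)) - P k ∈ Wlt P k := by
      have h5 : Δ (s (k + 1) - P (k + 1)) ∈ Wlt P k :=
        Delta_maps P Δ hΔ0 hΔsucc (hsmonic (k + 1))
      rw [map_sub, hΔsucc] at h5
      exact h5
    have hb4 : ‖p k‖ ≤ ‖Δ (s (k + 1))‖ := p_min P p hpmonic hportho k hΔs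
    have hpk0 : 0 < ‖p k‖ :=
      norm_pos_iff.mpr (fun h => monic_ne_zero P hP (hpmonic k) h)
    rw [hnum, div_le_iff₀ hD]
    have hc2 : ‖p (k + 2)‖ ≤ C ^ 2 * ‖p k‖ := by
      nlinarith [mul_le_mul_of_nonneg_left hb3 hC.le]
    have hnum_le : ‖p (k + 2)‖ ^ 2 ≤ C ^ 4 * ‖p k‖ ^ 2 := by
      have := pow_le_pow_left₀ (norm_nonneg (p (k + 2))) hc2 2
      nlinarith [this]
    have hden_ge : χ * ‖p k‖ ^ 2 ≤ ‖s (k + 1)‖ ^ 2 + χ * ‖Δ (s (k + 1))‖ ^ 2 := by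
      have := mul_le_mul_of_nonneg_left
        (pow_le_pow_left₀ (norm_nonneg (p k)) hb4 2) hχ.le
      nlinarith [sq_nonneg ‖s (k + 1)‖]
    have hfinal : C ^ 4 * ‖p k‖ ^ 2 = χ⁻¹ * C ^ 4 * (χ * ‖p k‖ ^ 2) := by
      field_simp
    have hC4 : (0:ℝ) ≤ χ⁻¹ * C ^ 4 := by positivity
    calc ‖p (k + 2)‖ ^ 2 ≤ C ^ 4 * ‖p k‖ ^ 2 := hnum_le
      _ = χ⁻¹ * C ^ 4 * (χ * ‖p k‖ ^ 2) := hfinal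
      _ ≤ χ⁻¹ * C ^ 4 * (‖s (k + 1)‖ ^ 2 + χ * ‖Δ (s (k + 1))‖ ^ 2) :=
          mul_le_mul_of_nonneg_left hden_ge hC4
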